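/- Let B: V × ⋯ × V → ℝ be a symmetric n-linear form preserved by a unipotent linear map P = I + N with N^{k+1} = 0, and let D ∈ V. Define Δ_m = ∑_{j=0}^{m-1} P^j D. Then the function m ↦ B(Δ_m, Δ_m, …, Δ_m) (n arguments) is a polynomial in m of degree at most k(n−1) + n. -/

import Mathlib

open Polynomial Finset Function

private def PD (f : ℕ → ℝ) (d : ℕ) : Prop :=
  ∃ p : Polynomial ℝ, p.natDegree ≤ d ∧ ∀ m : ℕ, f m = p.eval (m : ℝ)

private lemma PD_const (c : ℝ) (d : ℕ) : PD (fun _ => c) d :=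
  ⟨Polynomial.C c, by simp, fun m => by simp⟩

private lemma PD_mono {f : ℕ → ℝ} {d e : ℕ} (h : PD f d) (hde : d ≤ e) : PD f e := by
  obtain ⟨p, hp, he'⟩ := h; exact ⟨p, hp.trans hde, he'⟩

private lemma PD_congr {f g : ℕ → ℝ} {d : ℕ} (h : PD f d) (hfg : ∀ m, g m = f m) : PD g d := by
  obtain ⟨p, hp, he⟩ := h; exact ⟨p, hp, fun m => (hfg m).trans (he m)⟩

private lemma PD_neg {f : ℕ → ℝ} {d : ℕ} (h : PD f d) : PD (fun m => -f m) d := by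
  obtain ⟨p, hp, he⟩ := h
  exact ⟨-p, by simpa using hp, fun m => by simp [he m]⟩

private lemma PD_add {f g : ℕ → ℝ} {d : ℕ} (hf : PD f d) (hg : PD g d) :
    PD (fun m => f m + g m) d := by
  obtain ⟨p, hp, hpe⟩ := hf; obtain ⟨q, hq, hqe⟩ := hg
  exact ⟨p + q, (Polynomial.natDegree_add_le _ _).trans (max_le hp hq),
    fun m => by simp [hpe m, hqe m]⟩

private lemma PD_mul {f g : ℕ → ℝ} {df dg : ℕ} (hf : PD f df) (hg : PD g dg) :
    PD (fun m => f m * g m) (df + dg) := by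
  obtain ⟨p, hp, hpe⟩ := hf; obtain ⟨q, hq, hqe⟩ := hg
  exact ⟨p * q, Polynomial.natDegree_mul_le.trans (add_le_add hp hq),
    fun m => by simp [hpe m, hqe m]⟩

private lemma PD_sum {α : Type*} [DecidableEq α] (t : Finset α) (f : α → ℕ → ℝ) (d : ℕ) :
    (∀ a ∈ t, PD (f a) d) → PD (fun m => ∑ a ∈ t, f a m) d := by
  induction t using Finset.induction_on with
  | empty => intro _; exact PD_congr (PD_const 0 d) (fun m => by simp)
  | @insert a t ha ih =>
    intro h
    exact PD_congr
      (PD_add (h a (Finset.mem_insert_self a t)) (ih fun b hb => h b (Finset.mem_insert_of_mem hb)))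
      (fun m => Finset.sum_insert ha)

private lemma PD_choose (r : ℕ) : PD (fun m => (m.choose r : ℝ)) r := by
  refine ⟨Polynomial.C ((r.factorial : ℝ)⁻¹) * descPochhammer ℝ r, ?_, ?_⟩
  · exact Polynomial.natDegree_mul_le.trans (by simp [descPochhammer_natDegree])
  · intro m
    rw [Polynomial.eval_mul, Polynomial.eval_C, descPochhammer_eval_eq_descFactorial,
      Nat.descFactorial_eq_factorial_mul_choose]
    have h0 : (r.factorial : ℝ) ≠ 0 := by exact_mod_cast r.factorial_ne_zero
    push_cast
    rw [inv_mul_cancel_left₀ h0]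

private lemma PD_shift {f : ℕ → ℝ} {d : ℕ} (h : PD f d) : PD (fun m => f (m + 1)) d := by
  obtain ⟨p, hp, he⟩ := h
  refine ⟨p.comp (Polynomial.X + Polynomial.C 1), ?_, ?_⟩
  · exact Polynomial.natDegree_comp_le.trans
      (by rw [Polynomial.natDegree_X_add_C, mul_one]; exact hp)
  · intro m
    show f (m + 1) = _
    rw [Polynomial.eval_comp, he (m + 1)]
    push_cast
    simp

private lemma descFactorial_sum (d m : ℕ) :
    (d + 2) * ∑ j ∈ Finset.range m, j.descFactorial (d + 1) = m.descFactorial (d + 2) := by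
  induction m with
  | zero => simp
  | succ m ih =>
    rw [Finset.sum_range_succ, Nat.mul_add, ih, Nat.succ_descFactorial_succ]
    rcases Nat.lt_or_ge m (d + 1) with h | h
    · rw [Nat.descFactorial_eq_zero_iff_lt.2 h,
        Nat.descFactorial_eq_zero_iff_lt.2 (h.trans (Nat.lt_succ_self _))]
      simp
    · rw [Nat.descFactorial_succ, ← Nat.add_mul]
      congr 1
      omega

private lemma poly_sum_range (d : ℕ) : ∀ p : Polynomial ℝ, p.natDegree ≤ d →
    ∃ q : Polynomial ℝ, q.natDegree ≤ d + 1 ∧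
      ∀ m : ℕ, q.eval (m : ℝ) = ∑ j ∈ Finset.range m, p.eval (j : ℝ) := by
  induction d with
  | zero =>
    intro p hp
    refine ⟨Polynomial.C (p.coeff 0) * Polynomial.X, Polynomial.natDegree_mul_le.trans (by simp),
      fun m => ?_⟩
    have hpe : ∀ j : ℕ, p.eval (j : ℝ) = p.coeff 0 := by
      intro j
      conv_lhs => rw [Polynomial.eq_C_of_natDegree_le_zero hp]
      simp
    simp only [Polynomial.eval_mul, Polynomial.eval_C, Polynomial.eval_X]
    rw [Finset.sum_congr rfl fun j _ => hpe j, Finset.sum_const, Finset.card_range,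
      nsmul_eq_mul, mul_comm]
  | succ d ih =>
    intro p hp
    set c := p.coeff (d + 1) with hc
    have hmono := monic_descPochhammer ℝ (d + 1)
    have hdeg : (descPochhammer ℝ (d + 1)).natDegree = d + 1 := descPochhammer_natDegree ℝ (d + 1)
    have hr : (p - Polynomial.C c * descPochhammer ℝ (d + 1)).natDegree ≤ d := by
      rw [Polynomial.natDegree_le_iff_coeff_eq_zero]
      intro M hM
      rcases Nat.lt_or_ge M (d + 2) with h2 | h2
      · have hM1 : M = d + 1 := by omega
        subst hM1
        have e2 : (descPochhammer ℝ (d + 1)).coeff (d + 1) = 1 := by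
          have := hmono.coeff_natDegree; rwa [hdeg] at this
        simp [Polynomial.coeff_sub, Polynomial.coeff_C_mul, e2, ← hc]
      · have h' : d + 1 < M := by omega
        have e1 : p.coeff M = 0 :=
          Polynomial.coeff_eq_zero_of_natDegree_lt (lt_of_le_of_lt hp h')
        have e2 : (Polynomial.C c * descPochhammer ℝ (d + 1)).coeff M = 0 := by
          refine Polynomial.coeff_eq_zero_of_natDegree_lt
            (lt_of_le_of_lt (Polynomial.natDegree_mul_le.trans ?_) h')
          simp [hdeg]
        simp [Polynomial.coeff_sub, e1, e2]
    obtain ⟨q₀, hq₀, he₀⟩ := ih _ hr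
    refine ⟨q₀ + Polynomial.C (c / (d + 2)) * descPochhammer ℝ (d + 2), ?_, ?_⟩
    · refine (Polynomial.natDegree_add_le _ _).trans (max_le (hq₀.trans (by omega)) ?_)
      refine Polynomial.natDegree_mul_le.trans ?_
      simp [descPochhammer_natDegree]
    · intro m
      have hsum : ∀ j : ℕ, p.eval (j : ℝ) =
          (p - Polynomial.C c * descPochhammer ℝ (d + 1)).eval (j : ℝ)
            + c * ((j.descFactorial (d + 1) : ℕ) : ℝ) := by
        intro j
        rw [Polynomial.eval_sub, Polynomial.eval_mul, Polynomial.eval_C,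
          descPochhammer_eval_eq_descFactorial]
        ring
      rw [Finset.sum_congr rfl fun j _ => hsum j, Finset.sum_add_distrib, ← he₀,
        ← Finset.mul_sum, Polynomial.eval_add, Polynomial.eval_mul, Polynomial.eval_C,
        descPochhammer_eval_eq_descFactorial]
      congr 1
      have hNat := descFactorial_sum d m
      have hR : ((d : ℝ) + 2) * ∑ j ∈ Finset.range m, ((j.descFactorial (d + 1) : ℕ) : ℝ)
          = ((m.descFactorial (d + 2) : ℕ) : ℝ) := by exact_mod_cast hNat
      have hd2 : ((d : ℝ) + 2) ≠ 0 := by positivity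
      rw [← hR]
      field_simp

private lemma PD_of_step {f h : ℕ → ℝ} {d : ℕ} (hh : PD h d)
    (hstep : ∀ m, f (m + 1) = f m + h m) : PD f (d + 1) := by
  obtain ⟨p, hpd, hpe⟩ := hh
  obtain ⟨q, hqd, hqe⟩ := poly_sum_range d p hpd
  refine ⟨Polynomial.C (f 0) + q, (Polynomial.natDegree_add_le _ _).trans
    (max_le (by simp) hqd), fun m => ?_⟩
  rw [Polynomial.eval_add, Polynomial.eval_C, hqe]
  induction m with
  | zero => simp
  | succ m ih => rw [hstep m, ih, Finset.sum_range_succ, hpe m]; ring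

private lemma sum_range_choose_eq (i : ℕ) (m : ℕ) :
    ∑ j ∈ Finset.range m, j.choose i = m.choose (i + 1) := by
  induction m with
  | zero => simp
  | succ m ih =>
    rw [Finset.sum_range_succ, ih, Nat.choose_succ_succ, Nat.add_comm]

/-- For a symmetric `n`-linear form `B` preserved by a unipotent `P = I + N`
with `N^(k+1) = 0`, and `Δ_m = ∑_{j<m} P^j D`, the function `m ↦ B(Δ_m, …, Δ_m)` is a
polynomial in `m` of degree at most `k(n−1) + n`. -/
theorem selfIntersection_polynomial_degree_bound
    {V : Type*} [AddCommGroup V] [Module ℝ V] (n : ℕ)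
    (B : MultilinearMap ℝ (fun _ : Fin n => V) ℝ)
    (hsymm : ∀ (e : Equiv.Perm (Fin n)) (v : Fin n → V), B (v ∘ e) = B v)
    (P : Module.End ℝ V)
    (hinv : ∀ v : Fin n → V, B (fun i => P (v i)) = B v)
    (N : Module.End ℝ V) (hPN : P = 1 + N) (k : ℕ)
    (hN : N ^ (k + 1) = 0) (D : V) :
    ∃ p : Polynomial ℝ, p.natDegree ≤ k * (n - 1) + n ∧
      ∀ m : ℕ, B (fun _ => ∑ j ∈ Finset.range m, (P ^ j) D) = p.eval (m : ℝ) := by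
  classical
  rcases Nat.eq_zero_or_pos n with hn0 | hn
  · subst hn0
    refine ⟨Polynomial.C (B (fun _ => 0)), by simp, fun m => ?_⟩
    have h0 : (fun _ : Fin 0 => ∑ j ∈ Finset.range m, (P ^ j) D) = (fun _ => 0) :=
      funext fun i => i.elim0
    rw [h0]; simp
  set Δ : ℕ → V := fun m => ∑ j ∈ Finset.range m, (P ^ j) D with hΔdef
  have hNi : ∀ i, k + 1 ≤ i → N ^ i = 0 := by
    intro i hi
    rw [← Nat.sub_add_cancel hi, pow_add, hN, mul_zero]
  have hPm : ∀ m : ℕ, P ^ m = ∑ i ∈ Finset.range (k + 1), (m.choose i) • N ^ i := by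
    intro m
    have hbin : P ^ m = ∑ i ∈ Finset.range (m + 1), (m.choose i) • N ^ i := by
      rw [hPN, add_comm (1 : Module.End ℝ V) N, (Commute.one_right N).add_pow]
      refine Finset.sum_congr rfl fun i hi => ?_
      rw [one_pow, mul_one, nsmul_eq_mul]
      exact ((Nat.cast_commute (m.choose i) (N ^ i)).eq).symm
    rcases le_or_gt m k with h | h
    · rw [hbin]
      refine Finset.sum_subset (Finset.range_subset_range.2 (by omega)) fun i hi hni => ?_
      have : m < i := by
        simp only [Finset.mem_range, not_lt] at hni; omega
      rw [Nat.choose_eq_zero_of_lt this, zero_smul]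
    · rw [hbin]
      refine (Finset.sum_subset (Finset.range_subset_range.2 (by omega)) fun i hi hni => ?_).symm
      have : k + 1 ≤ i := by
        simp only [Finset.mem_range, not_lt] at hni; omega
      rw [hNi i this, smul_zero]
  have hΔ : ∀ m : ℕ, Δ m
      = ∑ i ∈ Finset.range (k + 1), ((m.choose (i + 1) : ℝ)) • (N ^ i) D := by
    intro m
    have h1 : Δ m = ∑ j ∈ Finset.range m, ∑ i ∈ Finset.range (k + 1),
        (j.choose i) • (N ^ i) D := by
      refine Finset.sum_congr rfl fun j _ => ?_
      rw [hPm j]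
      simp [LinearMap.sum_apply, LinearMap.smul_apply]
    rw [h1, Finset.sum_comm]
    refine Finset.sum_congr rfl fun i _ => ?_
    rw [← Finset.sum_smul, sum_range_choose_eq, Nat.cast_smul_eq_nsmul]
  -- key multilinear expansion lemma
  have key : ∀ s : Finset (Fin n), ∀ z : Fin n → V,
      PD (fun m => B (s.piecewise (fun _ => Δ m) z)) (s.card * (k + 1)) := by
    intro s
    induction s using Finset.induction_on with
    | empty =>
      intro z
      exact ⟨Polynomial.C (B z), by simp, fun m => by simp [Finset.piecewise_empty]⟩
    | @insert a s ha ih =>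
      intro z
      have hcard : (insert a s).card = s.card + 1 := Finset.card_insert_of_notMem ha
      have hup : ∀ m : ℕ, ∀ w : V, Function.update (s.piecewise (fun _ => Δ m) z) a w
          = s.piecewise (fun _ => Δ m) (Function.update z a w) := by
        intro m w; funext i
        rcases eq_or_ne i a with rfl | hia
        · rw [Function.update_self, Finset.piecewise_eq_of_notMem _ _ _ ha,
            Function.update_self]
        · rw [Function.update_of_ne hia]
          by_cases hi : i ∈ s
          · rw [Finset.piecewise_eq_of_mem _ _ _ hi, Finset.piecewise_eq_of_mem _ _ _ hi]
          · rw [Finset.piecewise_eq_of_notMem _ _ _ hi,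
              Finset.piecewise_eq_of_notMem _ _ _ hi, Function.update_of_ne hia]
      have hexp : ∀ m : ℕ, B ((insert a s).piecewise (fun _ => Δ m) z)
          = ∑ i ∈ Finset.range (k + 1), (m.choose (i + 1) : ℝ) *
              B (s.piecewise (fun _ => Δ m) (Function.update z a ((N ^ i) D))) := by
        intro m
        have e0 : B (Function.update (s.piecewise (fun _ => Δ m) z) a (Δ m))
            = B (Function.update (s.piecewise (fun _ => Δ m) z) a
                (∑ i ∈ Finset.range (k + 1), ((m.choose (i + 1) : ℝ)) • (N ^ i) D)) :=
          congrArg (fun u => B (Function.update (s.piecewise (fun _ => Δ m) z) a u)) (hΔ m)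
        rw [Finset.piecewise_insert]
        rw [e0, MultilinearMap.map_update_sum]
        refine Finset.sum_congr rfl fun i _ => ?_
        rw [B.map_update_smul, hup m, smul_eq_mul]
      refine PD_mono (PD_congr (PD_sum (Finset.range (k + 1))
        (fun i m => (m.choose (i + 1) : ℝ) *
          B (s.piecewise (fun _ => Δ m) (Function.update z a ((N ^ i) D))))
        ((k + 1) + s.card * (k + 1)) fun i hi => ?_) hexp) ?_
      · refine PD_mul (PD_mono (PD_choose (i + 1)) ?_) (ih (Function.update z a ((N ^ i) D)))
        have := Finset.mem_range.mp hi; omega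
      · rw [hcard, Nat.succ_mul]; omega
  -- the recurrence coming from invariance
  have hPΔ : ∀ m : ℕ, P (Δ m) = Δ (m + 1) + -D := by
    intro m
    have h1 : P (Δ m) = ∑ j ∈ Finset.range m, (P ^ (j + 1)) D := by
      simp only [hΔdef, map_sum]
      refine Finset.sum_congr rfl fun j _ => ?_
      rw [pow_succ', Module.End.mul_apply]
    have h2 : Δ (m + 1) = ∑ j ∈ Finset.range m, (P ^ (j + 1)) D + (P ^ 0) D :=
      Finset.sum_range_succ' _ m
    rw [h1, h2]
    simp
  have hrec : ∀ m : ℕ, B (fun _ => Δ m)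
      = ∑ s : Finset (Fin n), B (s.piecewise (fun _ => Δ (m + 1)) (fun _ => -D)) := by
    intro m
    have e1 : B (fun _ => Δ m) = B (fun i : Fin n => P ((fun _ : Fin n => Δ m) i)) :=
      (hinv _).symm
    have e2 : (fun i : Fin n => P ((fun _ : Fin n => Δ m) i))
        = (fun _ : Fin n => Δ (m + 1)) + (fun _ : Fin n => -D) := funext fun _ => hPΔ m
    rw [e1, e2, MultilinearMap.map_add_univ]
  have hGuniv : ∀ m : ℕ,
      B ((Finset.univ : Finset (Fin n)).piecewise (fun _ => Δ m) (fun _ => -D))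
        = B (fun _ => Δ m) := fun m => by rw [Finset.piecewise_univ]
  have hstep : ∀ m : ℕ, B (fun _ => Δ (m + 1)) = B (fun _ => Δ m) +
      (- ∑ s ∈ (Finset.univ : Finset (Finset (Fin n))).erase Finset.univ,
          B (s.piecewise (fun _ => Δ (m + 1)) (fun _ => -D))) := by
    intro m
    have h := hrec m
    rw [← Finset.add_sum_erase _ _ (Finset.mem_univ (Finset.univ : Finset (Fin n))),
      hGuniv (m + 1)] at h
    linarith
  have hh : PD (fun m => - ∑ s ∈ (Finset.univ : Finset (Finset (Fin n))).erase Finset.univ,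
      B (s.piecewise (fun _ => Δ (m + 1)) (fun _ => -D))) ((n - 1) * (k + 1)) := by
    refine PD_neg (PD_sum _ _ _ fun s hs => ?_)
    have hcard : s.card ≤ n - 1 := by
      have hne : s ≠ Finset.univ := (Finset.mem_erase.mp hs).1
      have hlt := (Finset.card_lt_iff_ne_univ s).2 hne
      rw [Fintype.card_fin] at hlt
      omega
    exact PD_mono (PD_shift (key s (fun _ => -D))) (Nat.mul_le_mul_right _ hcard)
  obtain ⟨p, hp, he⟩ := PD_of_step (f := fun m => B (fun _ => Δ m)) hh hstep
  refine ⟨p, ?_, fun m => ?_⟩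
  · refine hp.trans ?_
    calc (n - 1) * (k + 1) + 1 = k * (n - 1) + (n - 1) + 1 := by ring
    _ ≤ k * (n - 1) + n := by omega
  · exact he m
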